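/- The constrained minimizer lies in a ball of explicit radius: argmin_{x∈S_b} f(x) ∈ B(0, R) with R = √n + (1 + |b|/n)·√(κn), where κ = β/α. -/

import Mathlib

/-- Gradient inequality for a convex differentiable function on `ℝ`. -/
lemma grad_ineq_univ {h : ℝ → ℝ} (hc : ConvexOn ℝ Set.univ h)
    (hd : ∀ x, DifferentiableAt ℝ h x) (m y : ℝ) :
    h m + deriv h m * (y - m) ≤ h y := by
  rcases lt_trichotomy m y with hlt | rfl | hgt
  · have h1 := hc.deriv_le_slope (Set.mem_univ m) (Set.mem_univ y) hlt (hd m)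
    rw [slope_def_field, le_div_iff₀ (sub_pos.mpr hlt)] at h1
    linarith
  · simp
  · have h1 := hc.slope_le_deriv (Set.mem_univ y) (Set.mem_univ m) hgt (hd m)
    rw [slope_def_field] at h1
    have hmy : (0:ℝ) < m - y := by linarith
    rw [div_le_iff₀ hmy] at h1
    nlinarith

/-- The constrained minimizer lies in the ball of radius
`R = √n + (1 + |b|/n)√(κn)` centered at the origin, where `κ = β/α`. -/
theorem constrained_minimizer_in_ball (n : ℕ) (hn : 1 ≤ n) (α β b : ℝ)
    (hα : 0 < α) (hαβ : α ≤ β)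
    (g : Fin n → ℝ → ℝ)
    (hdiff : ∀ i x, DifferentiableAt ℝ (g i) x)
    (hconv : ∀ i, ConvexOn ℝ Set.univ (fun x => g i x - α / 2 * x ^ 2))
    (hsmooth : ∀ i x y, |deriv (g i) x - deriv (g i) y| ≤ β * |x - y|)
    (hloc : ∀ i, ∃ m : ℝ, m ∈ Set.Icc (-1 : ℝ) 1 ∧ (∀ y, g i m ≤ g i y) ∧ g i m = 0)
    (xstar : Fin n → ℝ)
    (hfeas : ∑ i, xstar i = b)
    (hmin : ∀ y : Fin n → ℝ, ∑ i, y i = b →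
      ∑ i, g i (xstar i) ≤ ∑ i, g i (y i)) :
    Real.sqrt (∑ i, xstar i ^ 2) ≤
      Real.sqrt n + (1 + |b| / n) * Real.sqrt (β / α * n) := by
  classical
  have hβ : 0 < β := lt_of_lt_of_le hα hαβ
  have hn0 : (0:ℝ) < n := by exact_mod_cast Nat.lt_of_lt_of_le Nat.zero_lt_one hn
  choose m hm1 hm2 hm3 using hloc
  -- derivative of g i at m i is zero
  have hderiv0 : ∀ i, deriv (g i) (m i) = 0 := by
    intro i
    have hlm : IsLocalMin (g i) (m i) := Filter.Eventually.of_forall (hm2 i)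
    exact hlm.deriv_eq_zero
  -- lower bound: α/2 (x - m i)^2 ≤ g i x
  have hlow : ∀ i x, α / 2 * (x - m i) ^ 2 ≤ g i x := by
    intro i x
    have hd : ∀ z, DifferentiableAt ℝ (fun x => g i x - α / 2 * x ^ 2) z := by
      intro z
      exact (hdiff i z).sub (((differentiable_pow 2).const_mul (α/2)) z)
    have key := grad_ineq_univ (hconv i) hd (m i) x
    have hda : HasDerivAt (fun x => g i x - α / 2 * x ^ 2)
        (deriv (g i) (m i) - α / 2 * (2 * (m i) ^ 1)) (m i) := by
      exact (hdiff i (m i)).hasDerivAt.sub ((hasDerivAt_pow 2 (m i)).const_mul (α/2))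
    rw [hda.deriv] at key
    rw [hderiv0 i, hm3 i] at key
    nlinarith [key]
  -- upper bound: g i x ≤ β/2 (x - m i)^2
  have hupp : ∀ i x, g i x ≤ β / 2 * (x - m i) ^ 2 := by
    intro i x
    set h2 : ℝ → ℝ := fun x => β / 2 * x ^ 2 - g i x with hh2
    have hda : ∀ z, HasDerivAt h2 (β * z - deriv (g i) z) z := by
      intro z
      have := ((hasDerivAt_pow 2 z).const_mul (β/2)).sub (hdiff i z).hasDerivAt
      exact this.congr_deriv (by rw [show (2:ℕ) - 1 = 1 from rfl]; push_cast; ring)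
    have hd : ∀ z, DifferentiableAt ℝ h2 z := fun z => (hda z).differentiableAt
    have hmono : Monotone (deriv h2) := by
      intro x y hxy
      rw [(hda x).deriv, (hda y).deriv]
      have := hsmooth i y x
      rw [abs_sub_le_iff] at this
      have h2 := this.1
      have : |y - x| = y - x := abs_of_nonneg (by linarith)
      nlinarith [this ▸ h2]
    have hc2 : ConvexOn ℝ Set.univ h2 :=
      hmono.convexOn_univ_of_deriv (fun z => hd z)
    have key := grad_ineq_univ hc2 hd (m i) x
    rw [(hda (m i)).deriv, hderiv0 i, hh2] at key
    simp only [hm3 i] at key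
    nlinarith [key]
  -- feasible comparison point
  set c : ℝ := (b - ∑ i, m i) / n with hc
  set y : Fin n → ℝ := fun i => m i + c with hy
  have hysum : ∑ i, y i = b := by
    simp only [hy, Finset.sum_add_distrib, Finset.sum_const, Finset.card_univ,
      Fintype.card_fin, nsmul_eq_mul, hc]
    field_simp
    ring
  have hchain : α / 2 * ∑ i, (xstar i - m i) ^ 2 ≤ β / 2 * (n * c ^ 2) := by
    have h1 : α / 2 * ∑ i, (xstar i - m i) ^ 2 ≤ ∑ i, g i (xstar i) := by
      rw [Finset.mul_sum]
      exact Finset.sum_le_sum fun i _ => hlow i (xstar i)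
    have h2 : ∑ i, g i (y i) ≤ β / 2 * (n * c ^ 2) := by
      calc ∑ i, g i (y i) ≤ ∑ _i : Fin n, β / 2 * c ^ 2 := by
            refine Finset.sum_le_sum fun i _ => ?_
            have := hupp i (y i)
            simpa [hy] using this
        _ = β / 2 * (n * c ^ 2) := by
            simp [Finset.sum_const, Finset.card_univ]; ring
    exact le_trans (le_trans h1 (hmin y hysum)) h2
  have hsq : ∑ i, (xstar i - m i) ^ 2 ≤ β / α * (n * c ^ 2) := by
    rw [div_mul_eq_mul_div, le_div_iff₀ hα]
    nlinarith [hchain]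
  -- Euclidean triangle inequality
  set u : EuclideanSpace ℝ (Fin n) := WithLp.toLp 2 (fun i => m i) with hu
  set v : EuclideanSpace ℝ (Fin n) := WithLp.toLp 2 (fun i => xstar i - m i) with hv
  have htri : ‖u + v‖ ≤ ‖u‖ + ‖v‖ := norm_add_le u v
  have hnormsum : Real.sqrt (∑ i, xstar i ^ 2) = ‖u + v‖ := by
    rw [EuclideanSpace.norm_eq]
    congr 1
    refine Finset.sum_congr rfl fun i _ => ?_
    rw [show (u + v) i = xstar i by simp [hu, hv], Real.norm_eq_abs, sq_abs]
  have hum : ‖u‖ ≤ Real.sqrt n := by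
    rw [EuclideanSpace.norm_eq]
    apply Real.sqrt_le_sqrt
    have : ∑ i, ‖u i‖ ^ 2 ≤ ∑ _i : Fin n, (1:ℝ) := by
      refine Finset.sum_le_sum fun i _ => ?_
      have h1 := (hm1 i).1
      have h2 := (hm1 i).2
      rw [show u i = m i from rfl, Real.norm_eq_abs, sq_abs]
      nlinarith
    simpa using this
  have hvm : ‖v‖ ≤ (1 + |b| / n) * Real.sqrt (β / α * n) := by
    rw [EuclideanSpace.norm_eq]
    have hveq : ∑ i, ‖v i‖ ^ 2 = ∑ i, (xstar i - m i) ^ 2 := by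
      refine Finset.sum_congr rfl fun i _ => ?_
      rw [show v i = xstar i - m i from rfl, Real.norm_eq_abs, sq_abs]
    rw [hveq]
    have step1 : Real.sqrt (∑ i, (xstar i - m i) ^ 2) ≤
        Real.sqrt (β / α * (n * c ^ 2)) := Real.sqrt_le_sqrt hsq
    refine step1.trans ?_
    have hmabs : |∑ i, m i| ≤ n := by
      calc |∑ i, m i| ≤ ∑ i, |m i| := Finset.abs_sum_le_sum_abs _ _
        _ ≤ ∑ _i : Fin n, (1:ℝ) := by
            refine Finset.sum_le_sum fun i _ => abs_le.mpr ⟨(hm1 i).1, (hm1 i).2⟩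
        _ = n := by simp
    have hcabs : |c| ≤ 1 + |b| / n := by
      rw [hc, abs_div, abs_of_pos hn0, div_le_iff₀ hn0]
      have : |b - ∑ i, m i| ≤ |b| + |∑ i, m i| := abs_sub _ _
      have h2 : |b| + |∑ i, m i| ≤ |b| + n := by linarith
      have h3 : (1 + |b| / n) * n = n + |b| := by field_simp
      rw [h3]; linarith
    have heq : Real.sqrt (β / α * (n * c ^ 2)) =
        Real.sqrt (β / α * n) * |c| := by
      rw [show β / α * (n * c ^ 2) = (β / α * n) * c ^ 2 by ring,
        Real.sqrt_mul (by positivity) (c ^ 2), Real.sqrt_sq_eq_abs]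
    rw [heq]
    have hs : (0:ℝ) ≤ Real.sqrt (β / α * n) := Real.sqrt_nonneg _
    calc Real.sqrt (β / α * n) * |c| ≤ Real.sqrt (β / α * n) * (1 + |b| / n) :=
          mul_le_mul_of_nonneg_left hcabs hs
      _ = (1 + |b| / n) * Real.sqrt (β / α * n) := by ring
  rw [hnormsum]
  exact htri.trans (add_le_add hum hvm)
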